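/- Let α ∈ (0,1) be irrational and θ ∈ [0,1), and let W be the word 1 0^{c₁-1} 1, where c₁ = ⌊1/α⌋. The frequency of occurrences of W in the Sturmian sequence ω(n) = χ_{[1-α,1)}(nα+θ mod 1) exists and equals (c₁+1)·α - 1. -/

import Mathlib

open Filter

/-- The Sturmian sequence of slope `α` and phase `θ`:
`ω(n) = 1` iff `nα + θ mod 1 ∈ [1-α, 1)`, and `0` otherwise. -/
noncomputable def sturmian (α θ : ℝ) (n : ℤ) : ℕ :=
  if 1 - α ≤ Int.fract ((n : ℝ) * α + θ) ∧ Int.fract ((n : ℝ) * α + θ) < 1 then 1 else 0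

lemma sturm_one (α θ : ℝ) (m : ℤ) :
    sturmian α θ m = 1 ↔ 1 - α ≤ Int.fract ((m : ℝ) * α + θ) := by
  simp [sturmian, Int.fract_lt_one]

lemma sturm_zero (α θ : ℝ) (m : ℤ) :
    sturmian α θ m = 0 ↔ Int.fract ((m : ℝ) * α + θ) < 1 - α := by
  simp only [sturmian, Int.fract_lt_one, and_true, ite_eq_right_iff, not_le]
  constructor
  · intro h
    by_contra hc
    push_neg at hc
    exact absurd (h hc) one_ne_zero
  · intro h hle
    linarith

lemma fract_shift (α θ : ℝ) (n : ℤ) (j : ℕ) :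
    Int.fract (((n + (j : ℤ) : ℤ) : ℝ) * α + θ)
      = Int.fract ((j : ℝ) * α + Int.fract ((n : ℝ) * α + θ)) := by
  have h : ((n + (j : ℤ) : ℤ) : ℝ) * α + θ
      = (j : ℝ) * α + Int.fract ((n : ℝ) * α + θ) + (⌊(n : ℝ) * α + θ⌋ : ℤ) := by
    have := Int.fract_add_floor ((n : ℝ) * α + θ)
    push_cast
    push_cast at this
    nlinarith [this]
  rw [h, Int.fract_add_intCast]

lemma fract_Ico (y : ℝ) (h1 : 1 ≤ y) (h2 : y < 2) : Int.fract y = y - 1 := by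
  have : Int.fract y = Int.fract (y - (1 : ℤ)) := (Int.fract_sub_intCast y 1).symm
  rw [this, Int.fract_eq_self.mpr ⟨by push_cast; linarith, by push_cast; linarith⟩]
  push_cast; ring

lemma key_equiv (α θ : ℝ) (h0 : 0 < α) (c₁ : ℕ) (hc1 : 1 ≤ c₁)
    (hlt : (c₁ : ℝ) * α < 1) (n : ℤ) :
    (sturmian α θ n = 1 ∧
      (∀ j : ℕ, 1 ≤ j → j ≤ c₁ - 1 → sturmian α θ (n + j) = 0) ∧
      sturmian α θ (n + c₁) = 1)
      ↔ 2 - ((c₁ : ℝ) + 1) * α ≤ Int.fract ((n : ℝ) * α + θ) := by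
  set x := Int.fract ((n : ℝ) * α + θ) with hx
  have hx0 : 0 ≤ x := Int.fract_nonneg _
  have hx1 : x < 1 := Int.fract_lt_one _
  have hc1R : (1 : ℝ) ≤ (c₁ : ℝ) := by exact_mod_cast hc1
  constructor
  · rintro ⟨hA, -, hC⟩
    rw [sturm_one] at hA hC
    rw [fract_shift] at hC
    have hge : (1 : ℝ) ≤ (c₁ : ℝ) * α + x := by nlinarith
    have hlt2 : (c₁ : ℝ) * α + x < 2 := by linarith
    rw [← hx, fract_Ico _ hge hlt2] at hC
    linarith
  · intro hb
    have hge1 : 1 - α ≤ x := by nlinarith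
    refine ⟨(sturm_one α θ n).mpr hge1, ?_, ?_⟩
    · intro j hj1 hj2
      have hjR : (j : ℝ) ≤ (c₁ : ℝ) - 1 := by
        have : (j : ℝ) ≤ ((c₁ - 1 : ℕ) : ℝ) := by exact_mod_cast hj2
        rwa [Nat.cast_sub hc1, Nat.cast_one] at this
      have hj1R : (1 : ℝ) ≤ (j : ℝ) := by exact_mod_cast hj1
      rw [sturm_zero, fract_shift, ← hx]
      have hge : (1 : ℝ) ≤ (j : ℝ) * α + x := by nlinarith
      have hlt2 : (j : ℝ) * α + x < 2 := by nlinarith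
      rw [fract_Ico _ hge hlt2]
      nlinarith
    · rw [sturm_one, fract_shift, ← hx]
      have hge : (1 : ℝ) ≤ (c₁ : ℝ) * α + x := by nlinarith
      have hlt2 : (c₁ : ℝ) * α + x < 2 := by linarith
      rw [fract_Ico _ hge hlt2]
      linarith

open scoped Classical in
/-- The frequency of the word `W = 1 0^{c₁-1} 1` in the Sturmian sequence of slope `α`
exists and equals `(c₁+1)·α - 1`, where `c₁ = ⌊1/α⌋`. -/
theorem stmt_8 (α θ : ℝ) (hirr : Irrational α) (h0 : 0 < α) (h1 : α < 1)
    (hθ : θ ∈ Set.Ico (0 : ℝ) 1) (c₁ : ℕ) (hc₁ : c₁ = ⌊1 / α⌋₊) :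
    Tendsto
      (fun N : ℕ =>
        (((Finset.range N).filter (fun n : ℕ =>
            sturmian α θ (n : ℤ) = 1 ∧
            (∀ j : ℕ, 1 ≤ j → j ≤ c₁ - 1 → sturmian α θ ((n : ℤ) + j) = 0) ∧
            sturmian α θ ((n : ℤ) + c₁) = 1)).card : ℝ) / N)
      atTop (nhds ((↑c₁ + 1) * α - 1)) := by
  obtain ⟨hθ0, hθ1⟩ := hθ
  -- basic facts about c₁
  have hc1 : 1 ≤ c₁ := by
    rw [hc₁]
    exact (Nat.one_le_floor_iff _).mpr (by rw [le_div_iff₀ h0]; linarith)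
  have hlt : (c₁ : ℝ) * α < 1 := by
    have hle : (c₁ : ℝ) ≤ 1 / α := by
      rw [hc₁]; exact Nat.floor_le (by positivity)
    have hne : (c₁ : ℝ) * α ≠ 1 := by
      intro h
      have hc0 : (c₁ : ℝ) ≠ 0 := by positivity
      have : α = ((1 / (c₁ : ℚ) : ℚ) : ℝ) := by
        push_cast
        field_simp
        linarith [h]
      exact hirr ⟨1 / (c₁ : ℚ), this.symm⟩
    have : (c₁ : ℝ) * α ≤ 1 := by
      rw [← le_div_iff₀ h0] at *; exact hle
    exact lt_of_le_of_ne this hne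
  have hgt : 1 < ((c₁ : ℝ) + 1) * α := by
    have := Nat.lt_floor_add_one (1 / α)
    rw [← hc₁] at this
    calc (1 : ℝ) = (1 / α) * α := by field_simp
    _ < ((c₁ : ℝ) + 1) * α := by
      apply mul_lt_mul_of_pos_right this h0
  -- the floor function
  set g : ℕ → ℝ := fun n => (⌊(n : ℝ) * α + θ⌋ : ℝ) with hg
  set K : ℕ := c₁ + 1 with hK
  have hKα : (K : ℝ) * α = ((c₁ : ℝ) + 1) * α := by push_cast [hK]; ring
  -- each indicator equals g(n+K) - g n - 1
  have hterm : ∀ n : ℕ,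
      (if (sturmian α θ (n : ℤ) = 1 ∧
          (∀ j : ℕ, 1 ≤ j → j ≤ c₁ - 1 → sturmian α θ ((n : ℤ) + j) = 0) ∧
          sturmian α θ ((n : ℤ) + c₁) = 1) then (1 : ℝ) else 0)
        = g (n + K) - g n - 1 := by
    intro n
    have hcast : ((n + K : ℕ) : ℝ) * α + θ = ((n : ℝ) * α + θ) + (K : ℝ) * α := by
      push_cast; ring
    have hflt : ⌊((n + K : ℕ) : ℝ) * α + θ⌋ ≤ ⌊(n : ℝ) * α + θ⌋ + 2 := by
      rw [hcast]
      have : ((n : ℝ) * α + θ) + (K : ℝ) * α < ((n : ℝ) * α + θ) + 2 := by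
        have : (K : ℝ) * α < 2 := by rw [hKα]; nlinarith
        linarith
      have h2 := Int.floor_le_floor (R := ℝ)
        (le_of_lt this)
      calc ⌊((n : ℝ) * α + θ) + (K : ℝ) * α⌋ ≤ ⌊((n : ℝ) * α + θ) + 2⌋ := h2
      _ = ⌊(n : ℝ) * α + θ⌋ + 2 := by
          rw [show ((2:ℝ) = ((2:ℤ):ℝ)) by norm_num, Int.floor_add_intCast]
    have hfge : ⌊(n : ℝ) * α + θ⌋ + 1 ≤ ⌊((n + K : ℕ) : ℝ) * α + θ⌋ := by
      rw [hcast]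
      have : ((n : ℝ) * α + θ) + 1 ≤ ((n : ℝ) * α + θ) + (K : ℝ) * α := by
        rw [hKα]; linarith
      calc ⌊(n : ℝ) * α + θ⌋ + 1 = ⌊((n : ℝ) * α + θ) + 1⌋ := by
            rw [show ((1:ℝ) = ((1:ℤ):ℝ)) by norm_num, Int.floor_add_intCast]
      _ ≤ _ := Int.floor_le_floor this
    have hiff : (sturmian α θ (n : ℤ) = 1 ∧
          (∀ j : ℕ, 1 ≤ j → j ≤ c₁ - 1 → sturmian α θ ((n : ℤ) + j) = 0) ∧
          sturmian α θ ((n : ℤ) + c₁) = 1)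
        ↔ ⌊(n : ℝ) * α + θ⌋ + 2 ≤ ⌊((n + K : ℕ) : ℝ) * α + θ⌋ := by
      rw [key_equiv α θ h0 c₁ hc1 hlt (n : ℤ), Int.cast_natCast]
      rw [hcast, ← hKα]
      constructor
      · intro h
        rw [Int.le_floor]
        have := Int.floor_le ((n : ℝ) * α + θ)
        have hfr : Int.fract ((n : ℝ) * α + θ) = ((n : ℝ) * α + θ) - ⌊(n : ℝ) * α + θ⌋ :=
          rfl
        rw [hfr] at h
        push_cast
        push_cast at h ⊢
        linarith
      · intro h
        rw [Int.le_floor] at h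
        have hfr : Int.fract ((n : ℝ) * α + θ) = ((n : ℝ) * α + θ) - ⌊(n : ℝ) * α + θ⌋ :=
          rfl
        rw [hfr]
        push_cast at h ⊢
        linarith
    by_cases hP : (sturmian α θ (n : ℤ) = 1 ∧
          (∀ j : ℕ, 1 ≤ j → j ≤ c₁ - 1 → sturmian α θ ((n : ℤ) + j) = 0) ∧
          sturmian α θ ((n : ℤ) + c₁) = 1)
    · rw [if_pos hP]
      have h2 := hiff.mp hP
      have : ⌊((n + K : ℕ) : ℝ) * α + θ⌋ = ⌊(n : ℝ) * α + θ⌋ + 2 := le_antisymm hflt h2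
      simp only [hg, this]
      push_cast; ring
    · rw [if_neg hP]
      have h2 : ¬ (⌊(n : ℝ) * α + θ⌋ + 2 ≤ ⌊((n + K : ℕ) : ℝ) * α + θ⌋) := fun h => hP (hiff.mpr h)
      have : ⌊((n + K : ℕ) : ℝ) * α + θ⌋ = ⌊(n : ℝ) * α + θ⌋ + 1 := by omega
      simp only [hg, this]
      push_cast; ring
  -- express the count
  have hcard : ∀ N : ℕ,
      (((Finset.range N).filter (fun n : ℕ =>
            sturmian α θ (n : ℤ) = 1 ∧
            (∀ j : ℕ, 1 ≤ j → j ≤ c₁ - 1 → sturmian α θ ((n : ℤ) + j) = 0) ∧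
            sturmian α θ ((n : ℤ) + c₁) = 1)).card : ℝ)
        = (∑ i ∈ Finset.range K, g (N + i)) - (∑ i ∈ Finset.range K, g i) - N := by
    intro N
    rw [Finset.card_filter]
    push_cast
    rw [show (∑ n ∈ Finset.range N, if (sturmian α θ (n : ℤ) = 1 ∧
            (∀ j : ℕ, 1 ≤ j → j ≤ c₁ - 1 → sturmian α θ ((n : ℤ) + j) = 0) ∧
            sturmian α θ ((n : ℤ) + c₁) = 1) then (1:ℝ) else 0)
        = ∑ n ∈ Finset.range N, (g (n + K) - g n - 1) from
      Finset.sum_congr rfl fun n _ => hterm n]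
    rw [Finset.sum_sub_distrib, Finset.sum_sub_distrib, Finset.sum_const, Finset.card_range]
    have h1' : ∑ n ∈ Finset.range N, g (n + K) =
        (∑ n ∈ Finset.range (K + N), g n) - ∑ n ∈ Finset.range K, g n := by
      rw [Finset.sum_range_add g K N]
      simp only [add_comm K]
      ring
    have h2' : ∑ n ∈ Finset.range (K + N), g n =
        (∑ n ∈ Finset.range N, g n) + ∑ i ∈ Finset.range K, g (N + i) := by
      rw [add_comm K N, Finset.sum_range_add g N K]
    rw [h1', h2']
    push_cast
    ring
  -- final limit
  rw [← tendsto_sub_nhds_zero_iff]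
  set C : ℝ := ∑ i ∈ Finset.range K, g i with hC
  set B : ℝ := (K : ℝ) * α + θ + 1 with hB
  have hBpos : 0 < B := by positivity
  apply squeeze_zero_norm' (a := fun N : ℕ => ((K : ℝ) * B + |C|) / N)
  · filter_upwards [eventually_ge_atTop 1] with N hN
    have hNpos : (0 : ℝ) < N := by exact_mod_cast hN
    rw [hcard N]
    have hbound : ∀ i ∈ Finset.range K, |g (N + i) - (N : ℝ) * α| ≤ B := by
      intro i hi
      rw [Finset.mem_range] at hi
      have hiK : (i : ℝ) ≤ (K : ℝ) := by exact_mod_cast le_of_lt hi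
      have heq : g (N + i) = ((N + i : ℕ) : ℝ) * α + θ - Int.fract (((N + i : ℕ) : ℝ) * α + θ) := by
        simp only [hg]
        have := Int.fract_add_floor (((N + i : ℕ) : ℝ) * α + θ)
        linarith
      have hf0 := Int.fract_nonneg (((N + i : ℕ) : ℝ) * α + θ)
      have hf1 := Int.fract_lt_one (((N + i : ℕ) : ℝ) * α + θ)
      have hi0 : (0:ℝ) ≤ (i:ℝ) := Nat.cast_nonneg i
      have hm1 : 0 ≤ (i:ℝ) * α := mul_nonneg hi0 h0.le
      have hm2 : (i:ℝ) * α ≤ (K:ℝ) * α := mul_le_mul_of_nonneg_right hiK h0.le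
      push_cast at heq hf0 hf1
      rw [abs_le]
      constructor
      · rw [heq, hB]; push_cast; nlinarith
      · rw [heq, hB]; push_cast; nlinarith
    have hsum : |(∑ i ∈ Finset.range K, g (N + i)) - (K : ℝ) * ((N : ℝ) * α)| ≤ (K : ℝ) * B := by
      have : (∑ i ∈ Finset.range K, g (N + i)) - (K : ℝ) * ((N : ℝ) * α)
          = ∑ i ∈ Finset.range K, (g (N + i) - (N : ℝ) * α) := by
        rw [Finset.sum_sub_distrib, Finset.sum_const, Finset.card_range]
        push_cast; ring
      rw [this]
      calc |∑ i ∈ Finset.range K, (g (N + i) - (N : ℝ) * α)|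
          ≤ ∑ i ∈ Finset.range K, |g (N + i) - (N : ℝ) * α| := Finset.abs_sum_le_sum_abs _ _
      _ ≤ ∑ _i ∈ Finset.range K, B := Finset.sum_le_sum hbound
      _ = (K : ℝ) * B := by rw [Finset.sum_const, Finset.card_range]; push_cast; ring
    have hKc : ((c₁ : ℝ) + 1) = (K : ℝ) := by push_cast [hK]; ring
    rw [Real.norm_eq_abs]
    have hexp : ((∑ i ∈ Finset.range K, g (N + i)) - C - N) / N - (((c₁ : ℝ) + 1) * α - 1)
        = (((∑ i ∈ Finset.range K, g (N + i)) - (K : ℝ) * ((N : ℝ) * α)) - C) / N := by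
      rw [hKc]
      field_simp
      ring
    rw [hexp, abs_div, abs_of_pos hNpos]
    apply div_le_div_of_nonneg_right ?_ hNpos.le |>.trans_eq rfl
    calc |((∑ i ∈ Finset.range K, g (N + i)) - (K : ℝ) * ((N : ℝ) * α)) - C|
        ≤ |(∑ i ∈ Finset.range K, g (N + i)) - (K : ℝ) * ((N : ℝ) * α)| + |C| := abs_sub _ _
    _ ≤ (K : ℝ) * B + |C| := by linarith
  · exact tendsto_const_div_atTop_nhds_zero_nat _
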